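/- If ρ is a q-shift invariant complex Borel measure on 𝕋^d, then Π(ρ) = ω_q ∗ ρ, where Π = Σ_{n≥1} 2^{-n} π^n for the invariant contracted map π, and ω_q = Σ_{n≥1} 2^{-n} ν_{q^n} is the q-adic support measure. -/

import Mathlib

open MeasureTheory
open scoped Classical

/-- The real part of a complex measure, as a signed measure. -/
noncomputable def cmRe {X : Type*} [MeasurableSpace X] (ν : ComplexMeasure X) :
    SignedMeasure X :=
  ν.mapRange Complex.reLm.toAddMonoidHom Complex.continuous_re

/-- The imaginary part of a complex measure, as a signed measure. -/
noncomputable def cmIm {X : Type*} [MeasurableSpace X] (ν : ComplexMeasure X) :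
    SignedMeasure X :=
  ν.mapRange Complex.imLm.toAddMonoidHom Complex.continuous_im

/-- Integration of a complex-valued function against a complex measure. -/
noncomputable def cIntegral {X : Type*} [MeasurableSpace X]
    (ν : ComplexMeasure X) (f : X → ℂ) : ℂ :=
  ((∫ x, f x ∂(cmRe ν).toJordanDecomposition.posPart) -
      (∫ x, f x ∂(cmRe ν).toJordanDecomposition.negPart)) +
    Complex.I *
      ((∫ x, f x ∂(cmIm ν).toJordanDecomposition.posPart) -
        (∫ x, f x ∂(cmIm ν).toJordanDecomposition.negPart))

/-- The Fourier coefficient `ν̂(k)` of a complex measure on the `d`-torus. -/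
noncomputable def cmFourier {d : ℕ} (ν : ComplexMeasure (Fin d → AddCircle (1 : ℝ)))
    (k : Fin d → ℤ) : ℂ :=
  cIntegral ν fun x => ∏ i, fourier (-(k i)) (x i)

section aux
variable {X Y : Type*} [MeasurableSpace X] [MeasurableSpace Y]

lemma cmRe_map (ν : ComplexMeasure X) (T : X → Y) :
    cmRe (ν.map T) = (cmRe ν).map T := by
  by_cases hT : Measurable T
  · ext s hs
    rw [VectorMeasure.map_apply _ hT hs]
    simp [cmRe, VectorMeasure.mapRange_apply, VectorMeasure.map_apply _ hT hs]
    exact congrArg Complex.reLm.toAddMonoidHom (VectorMeasure.map_apply _ hT hs)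
  · rw [VectorMeasure.map_not_measurable _ hT]
    rw [cmRe, VectorMeasure.map_not_measurable _ hT]
    exact VectorMeasure.mapRange_zero _

lemma cmIm_map (ν : ComplexMeasure X) (T : X → Y) :
    cmIm (ν.map T) = (cmIm ν).map T := by
  by_cases hT : Measurable T
  · ext s hs
    rw [VectorMeasure.map_apply _ hT hs]
    simp [cmIm, VectorMeasure.mapRange_apply, VectorMeasure.map_apply _ hT hs]
    exact congrArg Complex.imLm.toAddMonoidHom (VectorMeasure.map_apply _ hT hs)
  · rw [VectorMeasure.map_not_measurable _ hT]
    rw [cmIm, VectorMeasure.map_not_measurable _ hT]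
    exact VectorMeasure.mapRange_zero _

lemma toSignedMeasure_map (μ : Measure X) [IsFiniteMeasure μ] {T : X → Y} (hT : Measurable T) :
    (μ.map T).toSignedMeasure = μ.toSignedMeasure.map T := by
  ext s hs
  rw [VectorMeasure.map_apply _ hT hs, Measure.toSignedMeasure_apply_measurable hs,
    Measure.toSignedMeasure_apply_measurable (hT hs), map_measureReal_apply hT hs]

lemma vm_map_sub (u v : VectorMeasure X ℝ) (T : X → Y) :
    (u - v).map T = u.map T - v.map T :=
  map_sub (VectorMeasure.mapGm T : VectorMeasure X ℝ →+ VectorMeasure Y ℝ) u v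

variable [TopologicalSpace X] [TopologicalSpace Y] [CompactSpace X] [CompactSpace Y]
  [BorelSpace X] [BorelSpace Y] [T2Space Y]

lemma cont_integrable {f : Y → ℂ} (hf : Continuous f) (μ : Measure Y) [IsFiniteMeasure μ] :
    Integrable f μ :=
  hf.integrable_of_hasCompactSupport (HasCompactSupport.of_compactSpace f)

lemma jordan_integral_map (s : SignedMeasure X) {T : X → Y} (hT : Continuous T)
    {f : Y → ℂ} (hf : Continuous f) :
    ((∫ y, f y ∂(SignedMeasure.toJordanDecomposition (s.map T)).posPart) -
        ∫ y, f y ∂(SignedMeasure.toJordanDecomposition (s.map T)).negPart) =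
      (∫ x, f (T x) ∂s.toJordanDecomposition.posPart) -
        ∫ x, f (T x) ∂s.toJordanDecomposition.negPart := by
  have hTm : Measurable T := hT.measurable
  set A := (SignedMeasure.toJordanDecomposition (s.map T)).posPart
  set B := (SignedMeasure.toJordanDecomposition (s.map T)).negPart
  set P := s.toJordanDecomposition.posPart.map T
  set N := s.toJordanDecomposition.negPart.map T
  have hA : A.toSignedMeasure - B.toSignedMeasure = s.map T :=
    SignedMeasure.toSignedMeasure_toJordanDecomposition (s.map T)
  have hP : P.toSignedMeasure - N.toSignedMeasure = s.map T := by
    rw [toSignedMeasure_map _ hTm, toSignedMeasure_map _ hTm, ← vm_map_sub,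
      show s.toJordanDecomposition.posPart.toSignedMeasure -
          s.toJordanDecomposition.negPart.toSignedMeasure = s from
        s.toSignedMeasure_toJordanDecomposition]
  have key : A + N = B + P := by
    rw [← Measure.toSignedMeasure_eq_toSignedMeasure_iff, Measure.toSignedMeasure_add,
      Measure.toSignedMeasure_add]
    exact (sub_eq_sub_iff_add_eq_add.mp (hA.trans hP.symm)).trans (add_comm _ _)
  have hint : ∀ (μ : Measure Y) [IsFiniteMeasure μ], Integrable f μ := fun μ _ =>
    cont_integrable hf μ
  have h2 : (∫ y, f y ∂A) + ∫ y, f y ∂N = (∫ y, f y ∂B) + ∫ y, f y ∂P := by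
    rw [← integral_add_measure (hint A) (hint N), ← integral_add_measure (hint B) (hint P), key]
  have hmapP : ∫ y, f y ∂P = ∫ x, f (T x) ∂s.toJordanDecomposition.posPart :=
    integral_map hTm.aemeasurable hf.aestronglyMeasurable
  have hmapN : ∫ y, f y ∂N = ∫ x, f (T x) ∂s.toJordanDecomposition.negPart :=
    integral_map hTm.aemeasurable hf.aestronglyMeasurable
  rw [← hmapP, ← hmapN]
  linear_combination h2

lemma cIntegral_map (ν : ComplexMeasure X) {T : X → Y} (hT : Continuous T)
    {f : Y → ℂ} (hf : Continuous f) :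
    cIntegral (ν.map T) f = cIntegral ν (fun x => f (T x)) := by
  unfold cIntegral
  rw [cmRe_map, cmIm_map, jordan_integral_map _ hT hf, jordan_integral_map _ hT hf]

end aux

lemma fourier_nsmul (m : ℤ) (c : ℕ) (x : AddCircle (1 : ℝ)) :
    fourier m (c • x) = fourier (m * c) x := by
  rw [fourier_apply, fourier_apply, ← natCast_zsmul, smul_smul]

lemma cmFourier_mul {d : ℕ} (q : Fin d → ℕ)
    (ρ : ComplexMeasure (Fin d → AddCircle (1 : ℝ)))
    (hρ : ρ.map (fun x i => q i • x i :
        (Fin d → AddCircle (1 : ℝ)) → Fin d → AddCircle (1 : ℝ)) = ρ)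
    (a : Fin d → ℤ) :
    cmFourier ρ (fun i => (q i : ℤ) * a i) = cmFourier ρ a := by
  have hT : Continuous (fun x i => q i • x i :
      (Fin d → AddCircle (1 : ℝ)) → Fin d → AddCircle (1 : ℝ)) :=
    continuous_pi fun i => (continuous_apply i).nsmul (q i)
  have hf : Continuous (fun x : Fin d → AddCircle (1 : ℝ) => ∏ i, fourier (-(a i)) (x i)) :=
    continuous_finset_prod _ fun i _ =>
      (map_continuous (fourier (-(a i)))).comp (continuous_apply i)
  conv_rhs => rw [← hρ]
  unfold cmFourier
  rw [cIntegral_map _ hT hf]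
  congr 1
  funext x
  refine Finset.prod_congr rfl fun i _ => ?_
  rw [fourier_nsmul]
  congr 1
  ring

lemma cmFourier_pow {d : ℕ} (q : Fin d → ℕ)
    (ρ : ComplexMeasure (Fin d → AddCircle (1 : ℝ)))
    (hρ : ρ.map (fun x i => q i • x i :
        (Fin d → AddCircle (1 : ℝ)) → Fin d → AddCircle (1 : ℝ)) = ρ)
    (m : ℕ) (a : Fin d → ℤ) :
    cmFourier ρ (fun i => (q i : ℤ) ^ m * a i) = cmFourier ρ a := by
  induction m with
  | zero => simp
  | succ n ih =>
    have : (fun i => (q i : ℤ) ^ (n + 1) * a i) =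
        (fun i => (q i : ℤ) * ((q i : ℤ) ^ n * a i)) := by funext i; ring
    rw [this, cmFourier_mul q ρ hρ, ih]

/-- If `ρ` is a `q`-shift invariant complex Borel measure on the `d`-torus, then
`Π(ρ) = ω_q ∗ ρ`, expressed on Fourier coefficients: for every `k`,
`Σ_{n≥1} 2^{-n} (π^n ρ)^(k) = ω̂_q(k)·ρ̂(k)`, where `(π^n ρ)^(k) = ρ̂(k/q^n)` if `q^n ∣ k`
and `0` otherwise, and `ω̂_q(k) = Σ_{n≥1} 2^{-n} 1_{q^n ∣ k}`. -/
theorem stmt10 (d : ℕ) (q : Fin d → ℕ) (hq : ∀ i, 1 < q i)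
    (ρ : ComplexMeasure (Fin d → AddCircle (1 : ℝ)))
    (hρ : ρ.map (fun x i => q i • x i :
        (Fin d → AddCircle (1 : ℝ)) → Fin d → AddCircle (1 : ℝ)) = ρ)
    (k : Fin d → ℤ) :
    (∑' n : ℕ, (1 / 2 : ℂ) ^ (n + 1) *
        (if ∀ i, (q i : ℤ) ^ (n + 1) ∣ k i
          then cmFourier ρ fun i => Int.ediv (k i) ((q i : ℤ) ^ (n + 1)) else 0)) =
      (∑' n : ℕ, if ∀ i, (q i : ℤ) ^ (n + 1) ∣ k i then (1 / 2 : ℂ) ^ (n + 1) else 0) *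
        cmFourier ρ k := by
  rw [← tsum_mul_right]
  refine tsum_congr fun n => ?_
  by_cases h : ∀ i, (q i : ℤ) ^ (n + 1) ∣ k i
  · rw [if_pos h, if_pos h]
    have hk : (fun i => (q i : ℤ) ^ (n + 1) * Int.ediv (k i) ((q i : ℤ) ^ (n + 1))) = k := by
      funext i
      exact Int.mul_ediv_cancel' (h i)
    rw [← cmFourier_pow q ρ hρ (n + 1) (fun i => Int.ediv (k i) ((q i : ℤ) ^ (n + 1))), hk]
  · rw [if_neg h, if_neg h, mul_zero, zero_mul]
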